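/- Let n and e' be positive integers such that gcd(n, e') ∈ {1, 5} and the equation n*a^2 - 4e'*b^2 = -5 has an integer solution (a,b). Then n*e' is not a perfect square. -/

import Mathlib

/-- Key parity lemma: `X² - 4Y² = -5` or `-1` is impossible. -/
lemma aux_parity (X Y k : ℤ) (hk : k = -5 ∨ k = -1) (h : X ^ 2 - 4 * Y ^ 2 = k) :
    False := by
  rcases Int.even_or_odd X with ⟨m, hm⟩ | ⟨m, hm⟩
  · have h4 : 4 * (m ^ 2 - Y ^ 2) = k := by subst hm; ring_nf; ring_nf at h; linarith
    rcases hk with rfl | rfl <;> omega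
  · have h4 : 4 * (m ^ 2 + m - Y ^ 2) = k - 1 := by subst hm; ring_nf; ring_nf at h; linarith
    rcases hk with rfl | rfl <;> omega

/-- If `n, e'` are positive integers with `gcd(n, e') ∈ {1, 5}` and the equation
`n·a² - 4e'·b² = -5` has an integer solution, then `n·e'` is not a perfect square. -/
theorem stmt_1 (n e' : ℤ) (hn : 0 < n) (he' : 0 < e')
    (hg : (Int.gcd n e' : ℤ) = 1 ∨ (Int.gcd n e' : ℤ) = 5)
    (h : ∃ a b : ℤ, n * a ^ 2 - 4 * e' * b ^ 2 = -5) :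
    ¬ ∃ c : ℤ, n * e' = c ^ 2 := by
  rintro ⟨c, hc⟩
  obtain ⟨a, b, hab⟩ := h
  set d : ℤ := (Int.gcd n e' : ℤ) with hd
  have hdpos : 0 < d := by rcases hg with h1 | h1 <;> omega
  obtain ⟨m, hm⟩ : d ∣ n := Int.gcd_dvd_left n e'
  obtain ⟨f, hf⟩ : d ∣ e' := Int.gcd_dvd_right n e'
  have hmpos : 0 < m := by nlinarith
  have hfpos : 0 < f := by nlinarith
  have hd0 : d ≠ 0 := by omega
  -- coprimality of m and f
  have hm' : m = n / d := by rw [hm, Int.mul_ediv_cancel_left _ hd0]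
  have hf' : f = e' / d := by rw [hf, Int.mul_ediv_cancel_left _ hd0]
  have hco : IsCoprime m f := by
    rw [Int.isCoprime_iff_gcd_eq_one, hm', hf']
    exact Int.gcd_div_gcd_div_gcd (by rw [hd] at hdpos; exact_mod_cast hdpos)
  -- d divides c
  have hdc : d ∣ c := by
    have h2 : d ^ 2 ∣ c ^ 2 := ⟨m * f, by rw [← hc, hm, hf]; ring⟩
    exact (Int.pow_dvd_pow_iff (by norm_num)).mp h2
  obtain ⟨w, hw⟩ := hdc
  have hmf : m * f = w ^ 2 := by
    have h2 : d ^ 2 * (m * f) = d ^ 2 * w ^ 2 := by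
      calc d ^ 2 * (m * f) = n * e' := by rw [hm, hf]; ring
        _ = c ^ 2 := hc
        _ = d ^ 2 * w ^ 2 := by rw [hw]; ring
    exact mul_left_cancel₀ (pow_ne_zero 2 hd0) h2
  obtain ⟨u, hu⟩ := Int.sq_of_isCoprime hco hmf
  obtain ⟨v, hv⟩ := Int.sq_of_isCoprime hco.symm (by rw [mul_comm]; exact hmf)
  have hmu : m = u ^ 2 := by
    rcases hu with h1 | h1
    · exact h1
    · nlinarith [sq_nonneg u]
  have hfv : f = v ^ 2 := by
    rcases hv with h1 | h1
    · exact h1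
    · nlinarith [sq_nonneg v]
  -- rewrite the equation
  have heq : d * ((u * a) ^ 2 - 4 * (v * b) ^ 2) = -5 := by
    rw [hm, hmu, hf, hfv] at hab
    linarith [hab]
  rcases hg with h1 | h1
  · exact aux_parity (u * a) (v * b) (-5) (Or.inl rfl) (by rw [h1] at heq; linarith)
  · exact aux_parity (u * a) (v * b) (-1) (Or.inr rfl) (by rw [h1] at heq; linarith)
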